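/- arXiv:1305.1071 — 3 statements merged into one kernel-verified Lean document; each statement's English description precedes it below -/
import Mathlib

section
/- Let 1 → E → H → M → 1 be a short exact sequence of groups where E is free and M is torsion-free elementary amenable. Then H has the factorization property. -/
universe u

/-- The notion `Monoid.IsTorsionFree` as it stood in Mathlib (December 2024). -/
def Monoid.IsTorsionFree (G : Type*) [Monoid G] : Prop :=
  ∀ g : G, g ≠ 1 → ¬IsOfFinOrder g

/-- The class of elementary amenable groups: the smallest class of groups containing
all finite groups and all abelian groups, closed under subgroups, quotients,
extensions, and directed unions (and isomorphism). -/
inductive ElementaryAmenable : ∀ (G : Type u) [Group G], Prop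
  | of_finite (G : Type u) [Group G] (h : Finite G) : ElementaryAmenable G
  | of_abelian (G : Type u) [Group G] (h : ∀ a b : G, a * b = b * a) : ElementaryAmenable G
  | of_subgroup (G : Type u) [Group G] (H : Subgroup G) (h : ElementaryAmenable G) :
      ElementaryAmenable H
  | of_quotient (G : Type u) [Group G] (N : Subgroup G) [N.Normal] (h : ElementaryAmenable G) :
      ElementaryAmenable (G ⧸ N)
  | of_extension (G : Type u) [Group G] (N : Subgroup G) [N.Normal]
      (hN : ElementaryAmenable N) (hQ : ElementaryAmenable (G ⧸ N)) : ElementaryAmenable G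
  | of_directedUnion (G : Type u) [Group G] (ι : Type u) (K : ι → Subgroup G)
      (hdir : Directed (· ≤ ·) K) (hsup : (⨆ i, K i) = ⊤)
      (h : ∀ i, ElementaryAmenable (K i)) : ElementaryAmenable G
  | of_mulEquiv (G H : Type u) [Group G] [Group H] (e : G ≃* H) (h : ElementaryAmenable G) :
      ElementaryAmenable H

/-- A group `H` has the factorization property if every homomorphism from `H` to a
finite group factors through a torsion-free elementary amenable group. -/
def HasFactorizationProperty (H : Type u) [Group H] : Prop :=
  ∀ (P : GrpCat.{u}), Finite P → ∀ f : H →* P,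
    ∃ (M : GrpCat.{u}) (g : H →* M) (h : (M : Type u) →* P),
      Monoid.IsTorsionFree M ∧ ElementaryAmenable M ∧ h.comp g = f

section Auxiliary

open Subgroup

/-- In a free group, if a power `x ^ n` (with `n ≠ 0`) lies in the commutator subgroup,
then so does `x` (i.e. the abelianization of a free group is torsion-free). -/
private lemma FreeGroup.pow_mem_commutator {α : Type u} {x : FreeGroup α} {n : ℕ} (hn : n ≠ 0)
    (h : x ^ n ∈ commutator (FreeGroup α)) : x ∈ commutator (FreeGroup α) := by
  rw [← QuotientGroup.eq_one_iff (G := FreeGroup α) (N := commutator (FreeGroup α))] at h ⊢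
  set a : Abelianization (FreeGroup α) := Abelianization.of x with ha
  have hpow : a ^ n = 1 := by
    rw [ha, ← map_pow]
    exact h
  have hsmul : n • (Additive.ofMul a : FreeAbelianGroup α) = 0 := by
    rw [← ofMul_pow, hpow]
    rfl
  have hfins : n • (FreeAbelianGroup.toFinsupp (Additive.ofMul a : FreeAbelianGroup α)) = 0 := by
    exact (map_nsmul FreeAbelianGroup.toFinsupp n (Additive.ofMul a : FreeAbelianGroup α)).symm.trans
      ((congrArg FreeAbelianGroup.toFinsupp hsmul).trans (map_zero _))
  have hzero : FreeAbelianGroup.toFinsupp (Additive.ofMul a : FreeAbelianGroup α) = 0 := by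
    ext s
    have := DFunLike.congr_fun hfins s
    rw [Finsupp.smul_apply, Finsupp.coe_zero, Pi.zero_apply, nsmul_eq_mul] at this
    rcases mul_eq_zero.mp this with h0 | h0
    · exact absurd (Nat.cast_eq_zero.mp h0) hn
    · exact h0
  have : (Additive.ofMul a : FreeAbelianGroup α) = 0 := by
    have h1 := Finsupp.toFreeAbelianGroup_toFinsupp (X := α) (Additive.ofMul a)
    rw [hzero, map_zero] at h1
    exact h1.symm
  exact ofMul_eq_zero.mp this

/-- The abelianization of any free group is torsion-free, `IsFreeGroup` version. -/
private lemma IsFreeGroup.pow_mem_commutator {G : Type u} [Group G] [IsFreeGroup G] {x : G}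
    {n : ℕ} (hn : n ≠ 0) (h : x ^ n ∈ commutator G) : x ∈ commutator G := by
  set e := IsFreeGroup.toFreeGroup G with he
  have hmap : (commutator G).map e.toMonoidHom
      = commutator (FreeGroup (IsFreeGroup.Generators G)) := by
    rw [commutator_def, Subgroup.map_commutator,
      Subgroup.map_top_of_surjective _ e.surjective, commutator_def]
  have h2 : e x ^ n ∈ commutator (FreeGroup (IsFreeGroup.Generators G)) := by
    rw [← hmap, ← map_pow]
    exact Subgroup.mem_map_of_mem _ h
  have h3 := FreeGroup.pow_mem_commutator hn h2
  rw [← hmap] at h3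
  obtain ⟨y, hy, hyx⟩ := h3
  rwa [← e.injective hyx]

/-- If `U` is a subgroup of a group `H` contained in a free subgroup `A`, then torsion
modulo `⁅U, U⁆` inside `U` is trivial. -/
private lemma pow_mem_commutator_of_le_free {H : Type u} [Group H] (A : Subgroup H)
    [IsFreeGroup ↥A] (U : Subgroup H) (hUA : U ≤ A) {x : H} (hxU : x ∈ U) {n : ℕ}
    (hn : n ≠ 0) (hpow : x ^ n ∈ ⁅U, U⁆) : x ∈ ⁅U, U⁆ := by
  set U₀ : Subgroup ↥A := U.subgroupOf A with hU₀
  set ι : ↥U₀ →* H := A.subtype.comp U₀.subtype with hι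
  have hinj : Function.Injective ι := by
    exact (Subgroup.subtype_injective A).comp (Subgroup.subtype_injective U₀)
  have hrange : Subgroup.map ι ⊤ = U := by
    rw [← MonoidHom.range_eq_map, hι, MonoidHom.range_comp, Subgroup.range_subtype, hU₀,
      Subgroup.subgroupOf_map_subtype, inf_eq_left.mpr hUA]
  have hcomm : Subgroup.map ι (commutator ↥U₀) = ⁅U, U⁆ := by
    rw [commutator_def, Subgroup.map_commutator, hrange]
  have hxU₀ : (⟨x, hUA hxU⟩ : ↥A) ∈ U₀ := by
    rw [hU₀, Subgroup.mem_subgroupOf]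
    exact hxU
  set x₀ : ↥U₀ := ⟨⟨x, hUA hxU⟩, hxU₀⟩ with hx₀def
  have hx₀ : ι x₀ = x := rfl
  have hpow₀ : x₀ ^ n ∈ commutator ↥U₀ := by
    rw [← hcomm] at hpow
    obtain ⟨y, hy, hyx⟩ := hpow
    have : y = x₀ ^ n := by
      apply hinj
      rw [hyx, map_pow, hx₀]
    rwa [this] at hy
  have := IsFreeGroup.pow_mem_commutator hn hpow₀
  have hmem : ι x₀ ∈ Subgroup.map ι (commutator ↥U₀) := Subgroup.mem_map_of_mem _ this
  rwa [hcomm, hx₀] at hmem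

end Auxiliary

/-- An extension of a free group by a torsion-free elementary amenable group has the
factorization property. -/
theorem extension_free_by_tfea_hasFactorizationProperty
    (E H M : Type u) [Group E] [Group H] [Group M] [IsFreeGroup E]
    (i : E →* H) (π : H →* M) (hi : Function.Injective i) (hπ : Function.Surjective π)
    (hexact : π.ker = i.range)
    (hMtf : Monoid.IsTorsionFree M) (hMea : ElementaryAmenable M) :
    HasFactorizationProperty H := by
  intro P hPfin f
  -- The free kernel subgroup
  haveI hAfree : IsFreeGroup ↥(π.ker) := by
    rw [hexact]
    exact IsFreeGroup.ofMulEquiv (MonoidHom.ofInjective hi)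
  -- `A' = ker π ⊓ ker f`, a finite-index subgroup of the free kernel, normal in `H`
  set A' : Subgroup H := π.ker ⊓ f.ker with hA'def
  haveI hA'norm : A'.Normal := Subgroup.normal_inf_normal _ _
  -- `N = ⁅A', A'⁆`
  set N : Subgroup H := ⁅A', A'⁆ with hNdef
  haveI hNnorm : N.Normal := Subgroup.commutator_normal A' A'
  have hNA' : N ≤ A' := Subgroup.commutator_le_left A' A'
  have hNker : N ≤ f.ker := hNA'.trans inf_le_right
  have hNA : N ≤ π.ker := hNA'.trans inf_le_left
  -- the torsion-freeness of `H ⧸ N`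
  have htf : Monoid.IsTorsionFree (H ⧸ N) := by
    intro q hq hfin
    obtain ⟨n, hn, hqn⟩ := isOfFinOrder_iff_pow_eq_one.mp hfin
    obtain ⟨x, rfl⟩ := QuotientGroup.mk'_surjective N q
    apply hq
    have hxn : x ^ n ∈ N := by
      have h1 : (QuotientGroup.mk' N) (x ^ n) = 1 := by rw [map_pow]; exact hqn
      rwa [← MonoidHom.mem_ker, QuotientGroup.ker_mk'] at h1
    rw [← MonoidHom.mem_ker, QuotientGroup.ker_mk']
    -- Step 1: `x ∈ ker π` since `M` is torsion-free
    have hπx : π x = 1 := by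
      by_contra hne
      refine hMtf (π x) hne (isOfFinOrder_iff_pow_eq_one.mpr ⟨n, hn, ?_⟩)
      rw [← map_pow]
      exact hNA hxn
    have hxA : x ∈ π.ker := MonoidHom.mem_ker.mpr hπx
    -- Step 2: `x ∈ A'` via the free subgroup generated by `A'` and `x`
    set S : Subgroup H := A' ⊔ Subgroup.closure {x} with hSdef
    have hSA : S ≤ π.ker :=
      sup_le inf_le_left ((Subgroup.closure_le _).mpr (by simpa using hxA))
    have hxS : x ∈ S := Subgroup.mem_sup_right (Subgroup.subset_closure rfl)
    have hcomm_le : ⁅S, S⁆ ≤ A' := by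
      rw [Subgroup.commutator_le]
      intro a ha b hb
      have hmapS : S.map (QuotientGroup.mk' A')
          = Subgroup.zpowers ((QuotientGroup.mk' A') x) := by
        rw [hSdef, Subgroup.map_sup, QuotientGroup.map_mk'_self, MonoidHom.map_closure,
          Set.image_singleton, Subgroup.zpowers_eq_closure, bot_sup_eq]
      obtain ⟨k, hk⟩ := Subgroup.mem_zpowers_iff.mp
        (hmapS ▸ Subgroup.mem_map_of_mem (QuotientGroup.mk' A') ha)
      obtain ⟨l, hl⟩ := Subgroup.mem_zpowers_iff.mp
        (hmapS ▸ Subgroup.mem_map_of_mem (QuotientGroup.mk' A') hb)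
      rw [← QuotientGroup.ker_mk' A', MonoidHom.mem_ker, map_commutatorElement,
        commutatorElement_eq_one_iff_commute, ← hk, ← hl]
      exact Commute.zpow_zpow_self _ k l
    have hxA' : x ∈ A' := by
      refine hcomm_le (pow_mem_commutator_of_le_free π.ker S hSA hxS hn.ne' ?_)
      exact Subgroup.commutator_mono le_sup_left le_sup_left hxn
    -- Step 3: `x ∈ N` since the abelianization of the free group `A'` is torsion-free
    exact pow_mem_commutator_of_le_free π.ker A' inf_le_left hxA' hn.ne' hxn
  -- elementary amenability of `H ⧸ N`
  have hea : ElementaryAmenable.{u} (H ⧸ N) := by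
    set W : Subgroup (H ⧸ N) := π.ker.map (QuotientGroup.mk' N) with hWdef
    haveI hWnorm : W.Normal :=
      (MonoidHom.normal_ker π).map (QuotientGroup.mk' N) (QuotientGroup.mk'_surjective N)
    refine ElementaryAmenable.of_extension _ W ?_ ?_
    · -- `W` is (abelian)-by-(finite)
      set V : Subgroup (H ⧸ N) := A'.map (QuotientGroup.mk' N) with hVdef
      haveI hVnorm : V.Normal := hA'norm.map (QuotientGroup.mk' N) (QuotientGroup.mk'_surjective N)
      set VW : Subgroup ↥W := V.subgroupOf W with hVWdef
      refine ElementaryAmenable.of_extension _ VW ?_ ?_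
      · -- `VW` is abelian
        refine ElementaryAmenable.of_abelian _ ?_
        rintro ⟨⟨a, haW⟩, haV⟩ ⟨⟨b, hbW⟩, hbV⟩
        rw [hVWdef, Subgroup.mem_subgroupOf] at haV hbV
        obtain ⟨a', ha', rfl⟩ := haV
        obtain ⟨b', hb', rfl⟩ := hbV
        refine Subtype.ext (Subtype.ext ?_)
        show (QuotientGroup.mk' N) a' * (QuotientGroup.mk' N) b'
          = (QuotientGroup.mk' N) b' * (QuotientGroup.mk' N) a'
        open scoped commutatorElement in
        have : ⁅(QuotientGroup.mk' N) a', (QuotientGroup.mk' N) b'⁆ = 1 := by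
          rw [← map_commutatorElement, ← MonoidHom.mem_ker, QuotientGroup.ker_mk']
          exact Subgroup.commutator_mem_commutator ha' hb'
        exact (commutatorElement_eq_one_iff_commute.mp this).eq
      · -- `W ⧸ VW` is finite
        set h' : H ⧸ N →* P := QuotientGroup.lift N f hNker with hh'def
        set ρ : ↥W →* P := h'.comp W.subtype with hρdef
        have hkerρ : ρ.ker = VW := by
          ext w
          obtain ⟨a, haker, ha⟩ := w.2
          constructor
          · intro hw
            rw [MonoidHom.mem_ker, hρdef, MonoidHom.comp_apply] at hw
            rw [hVWdef, Subgroup.mem_subgroupOf, hVdef]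
            refine ⟨a, ⟨haker, ?_⟩, ha⟩
            have h2 : h' ((QuotientGroup.mk' N) a) = f a := QuotientGroup.lift_mk' N hNker a
            show f a = 1
            rw [← h2, ha]
            exact hw
          · intro hw
            rw [hVWdef, Subgroup.mem_subgroupOf, hVdef] at hw
            obtain ⟨a', ha', haa⟩ := hw
            rw [MonoidHom.mem_ker, hρdef, MonoidHom.comp_apply]
            have : (W.subtype w : H ⧸ N) = (QuotientGroup.mk' N) a' := haa.symm
            rw [this]
            have h2 : f a' = 1 := (Subgroup.mem_inf.mp (ha' : a' ∈ A')).2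
            exact (QuotientGroup.lift_mk' N hNker a').trans h2
        refine ElementaryAmenable.of_finite _ ?_
        rw [← hkerρ]
        haveI : Finite ↥ρ.range := Subgroup.instFiniteSubtypeMem ρ.range
        exact Finite.of_equiv _ (QuotientGroup.quotientKerEquivRange ρ).symm.toEquiv
    · -- `(H ⧸ N) ⧸ W ≃* M`
      have e1 : ((H ⧸ N) ⧸ W) ≃* H ⧸ π.ker :=
        QuotientGroup.quotientQuotientEquivQuotient N π.ker hNA
      have e2 : (H ⧸ π.ker) ≃* M := QuotientGroup.quotientKerEquivOfSurjective π hπ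
      exact ElementaryAmenable.of_mulEquiv M _ ((e1.trans e2).symm) hMea
  exact ⟨GrpCat.of (H ⧸ N), QuotientGroup.mk' N, QuotientGroup.lift N f hNker, htf, hea,
    MonoidHom.ext fun x => QuotientGroup.lift_mk' N hNker x⟩
end

section
/- Let G be a group, H a finite index normal subgroup of G, and U a normal subgroup of H such that H/U is elementary amenable. Let U^G be the normal core of U in G. Then G/U^G is elementary amenable. -/
universe u

lemma EA.prod {K L : Type u} [Group K] [Group L] (hK : ElementaryAmenable K)
    (hL : ElementaryAmenable L) : ElementaryAmenable (K × L) := by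
  refine .of_extension _ (MonoidHom.snd K L).ker ?_ ?_
  · refine .of_mulEquiv K _ ?_ hK
    exact
      { toFun := fun k => ⟨(k, 1), rfl⟩
        invFun := fun x => x.1.1
        left_inv := fun k => rfl
        right_inv := fun x => Subtype.ext (Prod.ext rfl (x.2 : _).symm)
        map_mul' := fun a b => Subtype.ext (Prod.ext rfl (one_mul (1:L)).symm) }
  · exact .of_mulEquiv L _ (QuotientGroup.quotientKerEquivOfSurjective
      (MonoidHom.snd K L) (fun l => ⟨(1, l), rfl⟩)).symm hL

lemma EA.quot_inf {H : Type u} [Group H] {A B : Subgroup H} [A.Normal] [B.Normal]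
    (hA : ElementaryAmenable (H ⧸ A)) (hB : ElementaryAmenable (H ⧸ B)) :
    ElementaryAmenable (H ⧸ (A ⊓ B)) := by
  set f := (QuotientGroup.mk' A).prod (QuotientGroup.mk' B) with hf
  have hker : f.ker = A ⊓ B := by
    ext x
    simp [f, MonoidHom.mem_ker, Prod.ext_iff, QuotientGroup.eq_one_iff, Subgroup.mem_inf]
  have e : H ⧸ (A ⊓ B) ≃* f.range :=
    (QuotientGroup.quotientMulEquivOfEq hker.symm).trans (QuotientGroup.quotientKerEquivRange f)
  exact .of_mulEquiv _ _ e.symm (.of_subgroup _ f.range (EA.prod hA hB))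

lemma EA.normal_biInf {H : Type u} [Group H] {ι : Type u} (s : Finset ι) (A : ι → Subgroup H)
    [hn : ∀ i, (A i).Normal] : (⨅ i ∈ s, A i).Normal := by
  constructor
  intro n hnmem g
  simp only [Subgroup.mem_iInf] at *
  exact fun i hi => (hn i).conj_mem n (hnmem i hi) g

lemma EA.quot_biInf {H : Type u} [Group H] {ι : Type u} (s : Finset ι) (A : ι → Subgroup H)
    [hn : ∀ i, (A i).Normal] (hea : ∀ i, ElementaryAmenable (H ⧸ A i)) :
    haveI := EA.normal_biInf s A
    ElementaryAmenable (H ⧸ ⨅ i ∈ s, A i) := by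
  haveI := EA.normal_biInf s A
  classical
  induction s using Finset.induction_on with
  | empty =>
      have htop : (⨅ i ∈ (∅ : Finset ι), A i) = ⊤ := by simp
      refine .of_mulEquiv (H ⧸ (⊤ : Subgroup H)) _
        (QuotientGroup.quotientMulEquivOfEq htop.symm) ?_
      haveI := QuotientGroup.subsingleton_quotient_top (G := H)
      exact .of_finite _ Finite.of_subsingleton
  | @insert a s ha ih =>
      haveI := EA.normal_biInf s A
      haveI := EA.normal_biInf (insert a s) A
      have heq : (⨅ i ∈ insert a s, A i) = A a ⊓ ⨅ i ∈ s, A i := by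
        rw [Finset.iInf_insert]
      refine .of_mulEquiv _ _ (QuotientGroup.quotientMulEquivOfEq heq.symm) ?_
      exact EA.quot_inf (hea a) (ih (EA.normal_biInf s A))

lemma EA.quot_iInf {H : Type u} [Group H] {ι : Type u} [Finite ι] (A : ι → Subgroup H)
    [hn : ∀ i, (A i).Normal] [hN : (⨅ i, A i).Normal]
    (hea : ∀ i, ElementaryAmenable (H ⧸ A i)) :
    ElementaryAmenable (H ⧸ ⨅ i, A i) := by
  cases nonempty_fintype ι
  have heq : (⨅ i, A i) = ⨅ i ∈ (Finset.univ : Finset ι), A i := by simp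
  haveI := EA.normal_biInf (Finset.univ : Finset ι) A
  exact .of_mulEquiv _ _ (QuotientGroup.quotientMulEquivOfEq heq.symm)
    (EA.quot_biInf Finset.univ A hea)

/-- If `H` is a finite index normal subgroup of `G`, `U ≤ H` is normal in `H` with
`H/U` elementary amenable, then `G/U^G` is elementary amenable, where `U^G` is the
normal core of `U` in `G`. -/
theorem quotient_normalCore_elementaryAmenable (G : Type u) [Group G] (H : Subgroup G)
    [H.Normal] [H.FiniteIndex] (U : Subgroup G) (hUH : U ≤ H)
    [hU : (U.subgroupOf H).Normal]
    (hEA : ElementaryAmenable ((H : Type u) ⧸ U.subgroupOf H)) :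
    ElementaryAmenable (G ⧸ U.normalCore) := by
  classical
  set N := U.normalCore with hN
  have hNU : N ≤ U := U.normalCore_le
  have hNH : N ≤ H := hNU.trans hUH
  have hUnorm : ∀ u ∈ U, ∀ h ∈ H, h * u * h⁻¹ ∈ U := by
    intro u hu h hh
    have := hU.conj_mem ⟨u, hUH hu⟩ (by simpa [Subgroup.mem_subgroupOf] using hu) ⟨h, hh⟩
    simpa [Subgroup.mem_subgroupOf] using this
  set A : G ⧸ H → Subgroup (H : Type u) := fun q =>
    (U.map (MulAut.conj q.out).toMonoidHom).subgroupOf H with hA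
  have memA : ∀ (q : G ⧸ H) (x : H), x ∈ A q ↔ (q.out)⁻¹ * (x : G) * q.out ∈ U := by
    intro q x
    rw [hA]
    simp only [Subgroup.mem_subgroupOf, Subgroup.mem_map]
    constructor
    · rintro ⟨u, hu, hux⟩
      have hx : (x : G) = q.out * u * q.out⁻¹ := by rw [← hux]; rfl
      have h2 : (q.out)⁻¹ * (x : G) * q.out = u := by rw [hx]; group
      rw [h2]; exact hu
    · intro hmem
      refine ⟨q.out⁻¹ * (x : G) * q.out, hmem, ?_⟩
      show q.out * (q.out⁻¹ * (x : G) * q.out) * q.out⁻¹ = (x : G)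
      group
  have hInf : (⨅ q, A q) = N.subgroupOf H := by
    ext x
    simp only [Subgroup.mem_iInf, Subgroup.mem_subgroupOf]
    constructor
    · intro hx b
      obtain ⟨h, hout⟩ := QuotientGroup.mk_out_eq_mul H (b⁻¹ : G)
      have hmem := (memA _ x).mp (hx (QuotientGroup.mk (b⁻¹ : G)))
      rw [hout] at hmem
      have h1 : (h : G)⁻¹ * (b * (x : G) * b⁻¹) * (h : G) ∈ U := by
        have heq : (b⁻¹ * (h : G))⁻¹ * (x : G) * (b⁻¹ * (h : G))
            = (h : G)⁻¹ * (b * (x : G) * b⁻¹) * (h : G) := by group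
        rwa [heq] at hmem
      have := hUnorm _ h1 (h : G) h.2
      have heq2 : (h : G) * ((h : G)⁻¹ * (b * (x : G) * b⁻¹) * (h : G)) * (h : G)⁻¹
          = b * (x : G) * b⁻¹ := by group
      rwa [heq2] at this
    · intro hx q
      rw [memA]
      have := hx (q.out)⁻¹
      simpa [mul_assoc] using this
  have hAn : ∀ q, (A q).Normal := by
    intro q
    constructor
    intro n hn h
    rw [memA] at hn ⊢
    have hhH : q.out⁻¹ * (h : G) * q.out ∈ H := by
      simpa [mul_assoc] using ‹H.Normal›.conj_mem (h : G) h.2 q.out⁻¹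
    have h1 := hUnorm _ hn _ hhH
    have heq : (q.out⁻¹ * (h : G) * q.out) * (q.out⁻¹ * (n : G) * q.out)
        * (q.out⁻¹ * (h : G) * q.out)⁻¹
        = q.out⁻¹ * ((h * n * h⁻¹ : H) : G) * q.out := by
      push_cast
      group
    rwa [heq] at h1
  haveI := hAn
  have hAq : ∀ q : G ⧸ H, ElementaryAmenable ((H : Type u) ⧸ A q) := by
    intro q
    set g := q.out with hg
    have hconjH : ∀ x : G, x ∈ H → g * x * g⁻¹ ∈ H := fun x hx =>
      ‹H.Normal›.conj_mem x hx g
    have hconjH' : ∀ x : G, x ∈ H → g⁻¹ * x * g ∈ H := fun x hx => by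
      simpa [mul_assoc] using ‹H.Normal›.conj_mem x hx g⁻¹
    set e : (H : Type u) ≃* (H : Type u) :=
      { toFun := fun x => ⟨g * (x : G) * g⁻¹, hconjH _ x.2⟩
        invFun := fun x => ⟨g⁻¹ * (x : G) * g, hconjH' _ x.2⟩
        left_inv := fun x => Subtype.ext (by simp only []; group)
        right_inv := fun x => Subtype.ext (by simp only []; group)
        map_mul' := fun x y => Subtype.ext (by push_cast; group) } with he
    have hmapU : (U.subgroupOf H).map e.toMonoidHom = A q := by
      ext y
      simp only [Subgroup.mem_map, MulEquiv.coe_toMonoidHom]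
      rw [memA]
      constructor
      · rintro ⟨x, hx, rfl⟩
        rw [Subgroup.mem_subgroupOf] at hx
        have heq : g⁻¹ * ((e x : H) : G) * g = (x : G) := by
          show g⁻¹ * (g * (x : G) * g⁻¹) * g = (x : G)
          group
        rw [hg] at heq
        rw [heq]
        exact hx
      · intro hy
        refine ⟨⟨g⁻¹ * (y : G) * g, hconjH' _ y.2⟩, ?_, ?_⟩
        · rw [Subgroup.mem_subgroupOf]; exact hy
        · apply Subtype.ext
          show g * (g⁻¹ * (y : G) * g) * g⁻¹ = (y : G)
          group
    exact .of_mulEquiv _ _ (QuotientGroup.congr (U.subgroupOf H) (A q) e hmapU) hEA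
  haveI : (N.subgroupOf H).Normal := by
    constructor
    intro n hn h
    rw [Subgroup.mem_subgroupOf] at *
    exact Subgroup.Normal.conj_mem inferInstance _ hn _
  have hQN : ElementaryAmenable ((H : Type u) ⧸ N.subgroupOf H) := by
    haveI : (⨅ q, A q).Normal := hInf ▸ ‹(N.subgroupOf H).Normal›
    refine .of_mulEquiv _ _ (QuotientGroup.quotientMulEquivOfEq hInf) ?_
    exact EA.quot_iInf A hAq
  set K : Subgroup (G ⧸ N) := H.map (QuotientGroup.mk' N) with hK
  haveI : K.Normal := Subgroup.Normal.map ‹H.Normal› _ (QuotientGroup.mk'_surjective N)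
  refine .of_extension _ K ?_ ?_
  · set f : (H : Type u) →* G ⧸ N := (QuotientGroup.mk' N).comp H.subtype with hf
    have hker : f.ker = N.subgroupOf H := by
      rw [hf, ← MonoidHom.comap_ker, QuotientGroup.ker_mk']
      rfl
    have hrange : f.range = K := by
      rw [hf, MonoidHom.range_comp, Subgroup.range_subtype]
    have e2 : (H : Type u) ⧸ N.subgroupOf H ≃* K :=
      ((QuotientGroup.quotientMulEquivOfEq hker.symm).trans
        (QuotientGroup.quotientKerEquivRange f)).trans (MulEquiv.subgroupCongr hrange)
    exact .of_mulEquiv _ _ e2 hQN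
  · refine .of_mulEquiv (G ⧸ H) _
      (QuotientGroup.quotientQuotientEquivQuotient N H hNH).symm ?_
    exact .of_finite _ inferInstance
end

section
/- Let G = N ∗_L (L × K) be an amalgamated free product where L is a subgroup of N, and let φ: G → N × K be the homomorphism induced by the inclusion N ↪ N × K (n ↦ (n,1)) and the inclusion L × K ↪ N × K. If N and K are torsion-free elementary amenable, then G has the factorization property. -/
universe u

/-- The two vertex groups `N` and `L × K` of the amalgamated product `N ∗_L (L × K)`,
indexed by `Bool`. -/
def AmalgFactor (N K : Type u) [Group N] [Group K] (L : Subgroup N) : Bool → Type u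
  | true => N
  | false => (↥L × K)

instance instGroupAmalgFactor (N K : Type u) [Group N] [Group K] (L : Subgroup N) :
    ∀ b, Group (AmalgFactor N K L b)
  | true => inferInstanceAs (Group N)
  | false => inferInstanceAs (Group (↥L × K))

/-- The two inclusions of `L` into the vertex groups of `N ∗_L (L × K)`. -/
def amalgMap (N K : Type u) [Group N] [Group K] (L : Subgroup N) :
    ∀ b, ↥L →* AmalgFactor N K L b
  | true => L.subtype
  | false => MonoidHom.inl ↥L K

namespace AmalgFP

open Monoid Monoid.PushoutI Finsupp SemidirectProduct

attribute [local instance] Finsupp.comapSMul Finsupp.comapMulAction Finsupp.comapDistribMulAction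

noncomputable section

variable {N K : Type u} [Group N] [Group K] {L : Subgroup N} {P : Type u} [Group P]

variable (f : Monoid.PushoutI (amalgMap N K L) →* P)

/-- hom `G i →* Pushout` for `i = true`, seen with domain `N`. -/
def ofN : N →* Monoid.PushoutI (amalgMap N K L) := Monoid.PushoutI.of (φ := amalgMap N K L) true

def ofLK : ↥L × K →* Monoid.PushoutI (amalgMap N K L) := Monoid.PushoutI.of (φ := amalgMap N K L) false

lemma ofN_subtype (l : ↥L) : ofN (L := L) (K := K) (l : N) = ofLK (l, 1) := by
  have h1 : ofN (L := L) (K := K) ((amalgMap N K L true) l) = Monoid.PushoutI.base _ l :=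
    Monoid.PushoutI.of_apply_eq_base (φ := amalgMap N K L) true l
  have h2 : ofLK (L := L) (K := K) ((amalgMap N K L false) l) = Monoid.PushoutI.base _ l :=
    Monoid.PushoutI.of_apply_eq_base (φ := amalgMap N K L) false l
  exact h1.trans h2.symm

def ρN : N →* P × N × K :=
  (f.comp (ofN)).prod ((MonoidHom.id N).prod 1)

def ρLK : ↥L × K →* P × N × K :=
  (f.comp (ofLK)).prod ((L.subtype.comp (MonoidHom.fst ↥L K)).prod (MonoidHom.snd ↥L K))

lemma rho_agree (l : ↥L) : ρN f (l : N) = ρLK f (l, 1) := by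
  unfold ρN ρLK
  ext <;> simp [ofN_subtype l]

lemma ρN_injective : Function.Injective (ρN f) := fun a b h => by
  exact congrArg (fun x => x.2.1) h

lemma ρLK_injective : Function.Injective (ρLK f) := fun a b h => by
  have h1 : (a.1 : N) = (b.1 : N) := congrArg (fun x => x.2.1) h
  have h2 : a.2 = b.2 := congrArg (fun x => x.2.2) h
  exact Prod.ext (Subtype.ext h1) h2

/-- the amalgamated copy of `L` inside `T = P × N × K`. -/
def jL : Subgroup (P × N × K) := ((ρLK f).comp (MonoidHom.inl ↥L K)).range

lemma rhoN_mem_jL (l : ↥L) : ρN f (l : N) ∈ jL f := ⟨l, (rho_agree f l).symm⟩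


/-- The generic automorphism action of a group on `S →₀ ℤ`. -/
def autsOf (T : Type u) [Group T] (S : Type u) [MulAction T S] :
    T →* MulAut (Multiplicative (S →₀ ℤ)) :=
  MonoidHom.mk' (fun t => AddEquiv.toMultiplicative ((DistribMulAction.toAddAut T (S →₀ ℤ)) t))
    (fun a b => by ext x : 1; exact mul_smul a b x.toAdd)

lemma autsOf_apply (T : Type u) [Group T] (S : Type u) [MulAction T S] (t : T)
    (x : Multiplicative (S →₀ ℤ)) : autsOf T S t x = Multiplicative.ofAdd (t • x.toAdd) := rfl

/-- the coset space `T ⧸ jL`. -/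
abbrev Ecos := (P × N × K) ⧸ jL f

abbrev Wgrp := Multiplicative ((Ecos f) →₀ ℤ) ⋊[autsOf (P × N × K) (Ecos f)] (P × N × K)

def e1 : (Ecos f) →₀ ℤ := Finsupp.single (QuotientGroup.mk 1) 1

lemma smul_e1 (t : P × N × K) :
    t • e1 f = Finsupp.single (QuotientGroup.mk t) 1 := by
  rw [e1, Finsupp.comapSMul_single]
  congr 1
  rw [MulAction.Quotient.smul_mk]
  norm_num

lemma single_coset_eq (t : P × N × K) (l : ↥L) :
    Finsupp.single (QuotientGroup.mk (t * ρN f (l : N)) : Ecos f) (1:ℤ)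
      = Finsupp.single (QuotientGroup.mk t) 1 := by
  congr 1
  rw [QuotientGroup.eq]
  have h : (t * ρN f (l : N))⁻¹ * t = (ρN f (l : N))⁻¹ := by group
  rw [h]
  exact Subgroup.inv_mem _ (rhoN_mem_jL f l)

def ΦN : N →* Wgrp f := SemidirectProduct.inr.comp (ρN f)

def cLK (x : ↥L × K) : (Ecos f) →₀ ℤ := (ρLK f x) • e1 f - (ρN f x.1) • e1 f

def ΦLK : ↥L × K →* Wgrp f :=
  MonoidHom.mk' (fun x => ⟨Multiplicative.ofAdd (cLK f x), ρLK f x⟩)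
    (fun x y => by
      refine SemidirectProduct.ext ?_ (by simp [map_mul])
      show Multiplicative.ofAdd (cLK f (x * y))
        = Multiplicative.ofAdd (cLK f x) * (autsOf _ _ (ρLK f x) (Multiplicative.ofAdd (cLK f y)))
      rw [autsOf_apply]
      rw [toAdd_ofAdd, ← ofAdd_add]
      congr 1
      unfold cLK
      rw [smul_sub, ← mul_smul, ← mul_smul, ← map_mul]
      simp only [smul_e1]
      have e1' : Finsupp.single (QuotientGroup.mk (ρLK f x * ρN f ((y.1 : N))) : Ecos f) (1:ℤ)
          = Finsupp.single (QuotientGroup.mk (ρLK f x)) 1 := single_coset_eq f _ _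
      have e2' : Finsupp.single (QuotientGroup.mk (ρN f (((x*y).1 : N))) : Ecos f) (1:ℤ)
          = Finsupp.single (QuotientGroup.mk (ρN f ((x.1 : N)))) 1 := by
        have : ρN f (((x*y).1 : N)) = ρN f ((x.1 : N)) * ρN f ((y.1 : N)) := by
          rw [← map_mul]; rfl
        rw [this]
        exact single_coset_eq f _ _
      rw [e1', e2']
      abel)


def fΦ : ∀ b, AmalgFactor N K L b →* Wgrp f
  | true => ΦN f
  | false => ΦLK f

lemma compat : ∀ b, (fΦ f b).comp (amalgMap N K L b) = (ΦN f).comp L.subtype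
  | true => rfl
  | false => by
      refine MonoidHom.ext fun l => ?_
      show ΦLK f (l, 1) = ΦN f (L.subtype l)
      refine SemidirectProduct.ext ?_ ?_
      · show Multiplicative.ofAdd (cLK f (l, 1)) = 1
        unfold cLK
        rw [show ((l,1) : ↥L × K).1 = l from rfl, rho_agree f l]
        simp
      · show ρLK f (l, 1) = ρN f (L.subtype l)
        exact (rho_agree f l).symm

/-- The main homomorphism from the pushout to the wreath-like group. -/
def Φ : Monoid.PushoutI (amalgMap N K L) →* Wgrp f :=
  Monoid.PushoutI.lift (fΦ f) ((ΦN f).comp L.subtype) (compat f)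

lemma Φ_of_true (n : N) : Φ f (ofN n) = ΦN f n :=
  Monoid.PushoutI.lift_of _ _ _ _

lemma Φ_of_false (x : ↥L × K) : Φ f (ofLK x) = ΦLK f x :=
  Monoid.PushoutI.lift_of _ _ _ _

/-- `π` component. -/
def πTh : Monoid.PushoutI (amalgMap N K L) →* P × N × K :=
  (SemidirectProduct.rightHom).comp (Φ f)

def πT (g : Monoid.PushoutI (amalgMap N K L)) : P × N × K := πTh f g

lemma πT_right (g : Monoid.PushoutI (amalgMap N K L)) : (Φ f g).right = πT f g := rfl

lemma πT_mul (g h : Monoid.PushoutI (amalgMap N K L)) : πT f (g * h) = πT f g * πT f h :=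
  map_mul (πTh f) g h

lemma πT_pow (g : Monoid.PushoutI (amalgMap N K L)) (n : ℕ) : πT f (g ^ n) = (πT f g) ^ n :=
  map_pow (πTh f) g n

lemma Φ_of_true' (n : N) :
    Φ f (Monoid.PushoutI.of (φ := amalgMap N K L) true n) = ΦN f n :=
  Monoid.PushoutI.lift_of _ _ _ _

lemma Φ_of_false' (x : AmalgFactor N K L false) :
    Φ f (Monoid.PushoutI.of (φ := amalgMap N K L) false x) = ΦLK f x :=
  Monoid.PushoutI.lift_of _ _ _ _

/-- cocycle component. -/
def cΦ (g : Monoid.PushoutI (amalgMap N K L)) : (Ecos f) →₀ ℤ :=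
  Multiplicative.toAdd (Φ f g).left

lemma cΦ_mul (g h : Monoid.PushoutI (amalgMap N K L)) :
    cΦ f (g * h) = cΦ f g + (πT f g) • cΦ f h := by
  unfold cΦ
  rw [map_mul, SemidirectProduct.mul_left]
  rfl

lemma cΦ_of_true (n : N) : cΦ f (ofN n) = 0 := by
  unfold cΦ
  rw [Φ_of_true]
  rfl

lemma cΦ_of_false (x : ↥L × K) : cΦ f (ofLK x) = cLK f x := by
  unfold cΦ
  rw [Φ_of_false]
  rfl

lemma cΦ_one : cΦ f 1 = 0 := by
  unfold cΦ; rw [map_one]; rfl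

lemma cΦ_pow (g : Monoid.PushoutI (amalgMap N K L)) (n : ℕ) :
    cΦ f (g ^ n) = ∑ i ∈ Finset.range n, (πT f g) ^ i • cΦ f g := by
  induction n with
  | zero => simpa using cΦ_one f
  | succ n ih =>
      rw [pow_succ, cΦ_mul, ih, πT_pow, Finset.sum_range_succ]

lemma fst_πT (g : Monoid.PushoutI (amalgMap N K L)) : (πT f g).1 = f g := by
  have h : (MonoidHom.fst P (N × K)).comp (πTh f) = f := by
    apply Monoid.PushoutI.hom_ext
    · intro i
      cases i
      · refine MonoidHom.ext fun x => ?_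
        show ((Φ f) (Monoid.PushoutI.of (φ := amalgMap N K L) false x)).right.1
          = f (Monoid.PushoutI.of (φ := amalgMap N K L) false x)
        rw [Φ_of_false']
        rfl
      · refine MonoidHom.ext fun n => ?_
        show ((Φ f) (Monoid.PushoutI.of (φ := amalgMap N K L) true n)).right.1
          = f (Monoid.PushoutI.of (φ := amalgMap N K L) true n)
        erw [Φ_of_true']
        rfl
    · refine MonoidHom.ext fun l => ?_
      show ((Φ f) (Monoid.PushoutI.base _ l)).right.1 = f (Monoid.PushoutI.base _ l)
      rw [← Monoid.PushoutI.of_apply_eq_base (φ := amalgMap N K L) true l]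
      erw [Φ_of_true']
      rfl
  exact congrArg (fun (F : Monoid.PushoutI (amalgMap N K L) →* P) => F g) h

lemma snd_πT_of_true (n : N) : (πT f (ofN n)).2 = (n, 1) := by
  unfold πT πTh
  show ((Φ f) (ofN n)).right.2 = (n,1)
  rw [Φ_of_true]; rfl

lemma snd_πT_of_false (x : ↥L × K) : (πT f (ofLK x)).2 = ((x.1 : N), x.2) := by
  unfold πT πTh
  show ((Φ f) (ofLK x)).right.2 = ((x.1 : N), x.2)
  rw [Φ_of_false]; rfl


section coset

variable {T : Type u} [Group T]

def cosetMap {H H' : Subgroup T} (hle : H ≤ H') : T ⧸ H → T ⧸ H' :=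
  Quotient.map' id (fun a b hab => by
    rw [QuotientGroup.leftRel_apply] at hab ⊢
    exact hle hab)

lemma cosetMap_mk {H H' : Subgroup T} (hle : H ≤ H') (t : T) :
    cosetMap hle (QuotientGroup.mk t) = QuotientGroup.mk t := rfl

lemma cosetMap_smul {H H' : Subgroup T} (hle : H ≤ H') (t : T) (x : T ⧸ H) :
    cosetMap hle (t • x) = t • cosetMap hle x := by
  induction x using Quotient.inductionOn with
  | h a =>
    rw [show (Quotient.mk _ a : T ⧸ H) = QuotientGroup.mk a from rfl]
    rw [MulAction.Quotient.smul_mk, cosetMap_mk, cosetMap_mk, MulAction.Quotient.smul_mk]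

def bdry {H H' : Subgroup T} (hle : H ≤ H') : ((T ⧸ H) →₀ ℤ) →+ ((T ⧸ H') →₀ ℤ) :=
  Finsupp.mapDomain.addMonoidHom (cosetMap hle)

lemma bdry_single {H H' : Subgroup T} (hle : H ≤ H') (x : T ⧸ H) (a : ℤ) :
    bdry hle (Finsupp.single x a) = Finsupp.single (cosetMap hle x) a :=
  Finsupp.mapDomain_single

lemma bdry_smul {H H' : Subgroup T} (hle : H ≤ H') (t : T) (u : (T ⧸ H) →₀ ℤ) :
    bdry hle (t • u) = t • bdry hle u := by
  show Finsupp.mapDomain _ (t • u) = t • Finsupp.mapDomain _ u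
  rw [Finsupp.comapSMul_def, Finsupp.comapSMul_def, ← Finsupp.mapDomain_comp,
    ← Finsupp.mapDomain_comp]
  congr 1
  funext x
  exact cosetMap_smul hle t x

lemma smul_single_one (H : Subgroup T) (t : T) :
    t • (Finsupp.single (QuotientGroup.mk (1:T) : T ⧸ H) (1:ℤ))
      = Finsupp.single (QuotientGroup.mk t) 1 := by
  rw [Finsupp.comapSMul_single]
  congr 1
  rw [MulAction.Quotient.smul_mk]
  norm_num

lemma single_one_eq_of_mem {H : Subgroup T} {t : T} (ht : t ∈ H) :
    (Finsupp.single (QuotientGroup.mk t : T ⧸ H) (1:ℤ))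
      = Finsupp.single (QuotientGroup.mk 1) 1 := by
  congr 1
  rw [QuotientGroup.eq]
  simpa using H.inv_mem ht

/-- sum-of-coefficients homomorphism -/
def eps {S : Type u} : (S →₀ ℤ) →+ ℤ := Finsupp.liftAddHom (fun _ => AddMonoidHom.id ℤ)

lemma eps_single {S : Type u} (s : S) (a : ℤ) : eps (Finsupp.single s a) = a := by
  simp [eps, Finsupp.liftAddHom_apply_single]

lemma eps_mapDomain {S S' : Type u} (h : S → S') (u : S →₀ ℤ) :
    eps (Finsupp.mapDomain h u) = eps u := by
  induction u using Finsupp.induction_linear with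
  | zero => simp
  | add a b ha hb => rw [Finsupp.mapDomain_add, map_add, map_add, ha, hb]
  | single s a => rw [Finsupp.mapDomain_single, eps_single, eps_single]

lemma eps_smul {S : Type u} [MulAction T S] (t : T) (u : S →₀ ℤ) :
    eps (t • u) = eps u := by
  rw [Finsupp.comapSMul_def, eps_mapDomain]

end coset

lemma jL_le_HN : jL f ≤ (ρN f).range := by
  rintro x ⟨l, rfl⟩
  exact ⟨(l : N), rho_agree f l⟩

lemma jL_le_HLK : jL f ≤ (ρLK f).range := by
  rintro x ⟨l, rfl⟩
  exact ⟨(l, 1), rfl⟩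

def bdry₁ : ((Ecos f) →₀ ℤ) →+ (((P × N × K) ⧸ (ρN f).range) →₀ ℤ) := bdry (jL_le_HN f)

def bdry₂ : ((Ecos f) →₀ ℤ) →+ (((P × N × K) ⧸ (ρLK f).range) →₀ ℤ) := bdry (jL_le_HLK f)

def X₁ : ((P × N × K) ⧸ (ρN f).range) →₀ ℤ := Finsupp.single (QuotientGroup.mk 1) 1

lemma bdry₁_single (x : Ecos f) (a : ℤ) :
    bdry₁ f (Finsupp.single x a) = Finsupp.single (cosetMap (jL_le_HN f) x) a :=
  bdry_single _ x a

lemma bdry₂_single (x : Ecos f) (a : ℤ) :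
    bdry₂ f (Finsupp.single x a) = Finsupp.single (cosetMap (jL_le_HLK f) x) a :=
  bdry_single _ x a

lemma bdry₁_smul (t : P × N × K) (u : (Ecos f) →₀ ℤ) :
    bdry₁ f (t • u) = t • bdry₁ f u := bdry_smul _ t u

lemma bdry₂_smul (t : P × N × K) (u : (Ecos f) →₀ ℤ) :
    bdry₂ f (t • u) = t • bdry₂ f u := bdry_smul _ t u

lemma mem_rangeN (n : N) : ρN f n ∈ (ρN f).range := ⟨n, rfl⟩

lemma mem_rangeLK (x : ↥L × K) : ρLK f x ∈ (ρLK f).range := ⟨x, rfl⟩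

lemma mem_rangeLK' (l : ↥L) : ρN f (l : N) ∈ (ρLK f).range := ⟨(l, 1), (rho_agree f l).symm⟩

lemma bdry_ids_of_true (n : N) :
    bdry₁ f (cΦ f (Monoid.PushoutI.of (φ := amalgMap N K L) true n))
        = πT f (Monoid.PushoutI.of (φ := amalgMap N K L) true n) • X₁ f - X₁ f
      ∧ bdry₂ f (cΦ f (Monoid.PushoutI.of (φ := amalgMap N K L) true n)) = 0 := by
  have hc : cΦ f (Monoid.PushoutI.of (φ := amalgMap N K L) true n) = 0 := by
    unfold cΦ; rw [Φ_of_true']; rfl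
  have hπ : πT f (Monoid.PushoutI.of (φ := amalgMap N K L) true n) = ρN f n := by
    unfold πT πTh
    show ((Φ f) _).right = _
    rw [Φ_of_true']; rfl
  constructor
  · rw [hc, hπ, map_zero]
    unfold X₁
    rw [smul_single_one, single_one_eq_of_mem (mem_rangeN f n), sub_self]
  · rw [hc, map_zero]

lemma bdry_ids (g : Monoid.PushoutI (amalgMap N K L)) :
    bdry₁ f (cΦ f g) = πT f g • X₁ f - X₁ f ∧ bdry₂ f (cΦ f g) = 0 := by
  induction g using Monoid.PushoutI.induction_on with
  | of i x =>
      cases i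
      · -- false case
        have hc : cΦ f (Monoid.PushoutI.of (φ := amalgMap N K L) false x) = cLK f x := by
          unfold cΦ; rw [Φ_of_false']; rfl
        have hπ : πT f (Monoid.PushoutI.of (φ := amalgMap N K L) false x) = ρLK f x := by
          unfold πT πTh
          show ((Φ f) _).right = _
          rw [Φ_of_false']; rfl
        have hcLK : cLK f x = Finsupp.single (QuotientGroup.mk (ρLK f x)) 1
            - Finsupp.single (QuotientGroup.mk (ρN f (x.1 : N))) 1 := by
          unfold cLK e1
          rw [smul_single_one, smul_single_one]
        constructor
        · rw [hc, hπ, hcLK, map_sub, bdry₁_single, bdry₁_single, cosetMap_mk, cosetMap_mk]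
          unfold X₁
          rw [smul_single_one, single_one_eq_of_mem (mem_rangeN f ((x.1 : N)))]
        · rw [hc, hcLK, map_sub, bdry₂_single, bdry₂_single, cosetMap_mk, cosetMap_mk]
          rw [single_one_eq_of_mem (mem_rangeLK f x),
            single_one_eq_of_mem (mem_rangeLK' f x.1), sub_self]
      · exact bdry_ids_of_true f x
  | base h =>
      rw [← Monoid.PushoutI.of_apply_eq_base (φ := amalgMap N K L) true h]
      exact bdry_ids_of_true f _
  | mul x y hx hy =>
      have hcm := cΦ_mul f x y
      constructor
      · rw [hcm, map_add, hx.1, bdry₁_smul, hy.1, πT_mul, smul_sub, mul_smul]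
        abel
      · rw [hcm, map_add, hx.2, bdry₂_smul, hy.2, smul_zero, add_zero]


section OrbAux

variable {T : Type u} [Group T] {S : Type u} [MulAction T S]

lemma ev_smul (t : T) (u : S →₀ ℤ) (x : S) : (t • u) x = u (t⁻¹ • x) := by
  rw [Finsupp.comapSMul_def]
  conv_lhs => rw [show x = t • (t⁻¹ • x) by simp]
  exact Finsupp.mapDomain_apply (MulAction.injective t) u _

lemma fix_pow {q : T} {s : S} (h : q • s = s) (n : ℕ) : q ^ n • s = s := by
  induction n with
  | zero => simp
  | succ n ih => rw [pow_succ, mul_smul, h, ih]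

lemma fix_inv {q : T} {s : S} (h : q • s = s) : q⁻¹ • s = s := by
  conv_lhs => rw [← h]
  simp

lemma fix_zpow {q : T} {s : S} (h : q • s = s) (n : ℤ) : q ^ n • s = s := by
  induction n using Int.induction_on with
  | zero => simp
  | succ k ih => rw [zpow_add_one, mul_smul, h, ih]
  | pred k ih => rw [zpow_sub_one, mul_smul, fix_inv h, ih]

/-- if a power `q^d` with `0 < d < p` fixes `s` and `q^p = 1` with `p` prime, then `q` fixes `s`. -/
lemma fix_of_fix_pow {p : ℕ} (pp : p.Prime) {q : T} (hq : q ^ p = 1) {s : S} {d : ℕ}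
    (hd0 : 0 < d) (hdp : d < p) (h : q ^ d • s = s) : q • s = s := by
  have hnd : ¬ (p ∣ d) := Nat.not_dvd_of_pos_of_lt hd0 hdp
  have hcop : Nat.gcd p d = 1 := (Nat.Prime.coprime_iff_not_dvd pp).mpr hnd
  have hbez : (1 : ℤ) = p * Nat.gcdA p d + d * Nat.gcdB p d := by
    rw [← Nat.gcd_eq_gcd_ab p d, hcop]; norm_num
  have h1 : q = (q ^ (p:ℤ)) ^ (Nat.gcdA p d) * (q ^ (d:ℤ)) ^ (Nat.gcdB p d) := by
    rw [← zpow_mul, ← zpow_mul, ← zpow_add, ← hbez, zpow_one]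
  have hqp : q ^ (p:ℤ) = 1 := by rw [zpow_natCast, hq]
  have hqd : (q ^ (d:ℤ)) • s = s := by rw [zpow_natCast]; exact h
  conv_lhs => rw [h1]
  rw [mul_smul]
  rw [fix_zpow hqd (Nat.gcdB p d)]
  rw [hqp, one_zpow, one_smul]


variable {p : ℕ}

/-- orbit enumeration -/
def yOrb (q : T) (s : S) (i : ℕ) : S := (q⁻¹) ^ i • s

lemma yOrb_succ (q : T) (s : S) (i : ℕ) : yOrb q s (i+1) = q⁻¹ • yOrb q s i := by
  unfold yOrb
  rw [pow_succ', mul_smul]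

lemma q_smul_yOrb_succ (q : T) (s : S) (i : ℕ) : q • yOrb q s (i+1) = yOrb q s i := by
  rw [yOrb_succ, smul_smul, mul_inv_cancel, one_smul]

lemma yOrb_p (pp : p.Prime) {q : T} (hq : q ^ p = 1) (s : S) : yOrb q s p = s := by
  unfold yOrb
  rw [inv_pow, hq, inv_one, one_smul]

lemma yOrb_zero (q : T) (s : S) : yOrb q s 0 = s := by
  unfold yOrb; rw [pow_zero, one_smul]

lemma q_smul_yOrb_zero (pp : p.Prime) {q : T} (hq : q ^ p = 1) (s : S) :
    q • yOrb q s 0 = yOrb q s (p-1) := by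
  have h := q_smul_yOrb_succ q s (p-1)
  have h1 : p - 1 + 1 = p := Nat.succ_pred_eq_of_pos pp.pos
  rw [h1, yOrb_p pp hq] at h
  rw [yOrb_zero]
  exact h

lemma yOrb_inj (pp : p.Prime) {q : T} (hq : q ^ p = 1) {s : S} (hs : ¬ q • s = s) :
    ∀ i, i < p → ∀ j, j < p → yOrb q s i = yOrb q s j → i = j := by
  have key : ∀ i j, i < p → j < p → i < j → yOrb q s i = yOrb q s j → False := by
    intro i j hi hj hij heq
    unfold yOrb at heq
    have hd : (q⁻¹) ^ (j - i) • s = s := by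
      have : (q⁻¹) ^ i • ((q⁻¹) ^ (j-i) • s) = (q⁻¹) ^ i • s := by
        rw [smul_smul, ← pow_add]
        rw [show i + (j - i) = j from by omega]
        exact heq.symm
      exact smul_left_cancel _ this
    have hqinv : (q⁻¹) ^ p = 1 := by rw [inv_pow, hq, inv_one]
    have : q⁻¹ • s = s := fix_of_fix_pow pp hqinv (by omega) (by omega) hd
    exact hs (by conv_lhs => rw [← this, smul_smul, mul_inv_cancel, one_smul])
  intro i hi j hj heq
  rcases lt_trichotomy i j with h | h | h
  · exact absurd heq (fun he => key i j hi hj h he)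
  · exact h
  · exact absurd heq (fun he => key j i hj hi h he.symm)

lemma osum_eval (pp : p.Prime) {q : T} (hq : q ^ p = 1) {s : S} (hs : ¬ q • s = s)
    (c : ℕ → ℤ) {j₀ : ℕ} (hj₀ : j₀ < p) :
    (∑ j ∈ Finset.range p, Finsupp.single (yOrb q s j) (c j)) (yOrb q s j₀) = c j₀ := by
  classical
  rw [Finsupp.finset_sum_apply]
  rw [Finset.sum_eq_single j₀]
  · simp
  · intro j hj hne
    rw [Finsupp.single_apply]
    rw [if_neg]
    intro heq
    exact hne (yOrb_inj pp hq hs j (Finset.mem_range.mp hj) j₀ hj₀ heq)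
  · intro h
    exact absurd (Finset.mem_range.mpr hj₀) h

lemma osum_eval_off {q : T} {s : S} (c : ℕ → ℤ) {x : S} (hx : ∀ j, j < p → x ≠ yOrb q s j) :
    (∑ j ∈ Finset.range p, Finsupp.single (yOrb q s j) (c j)) x = 0 := by
  classical
  rw [Finsupp.finset_sum_apply]
  apply Finset.sum_eq_zero
  intro j hj
  rw [Finsupp.single_apply, if_neg]
  intro heq
  exact hx j (Finset.mem_range.mp hj) heq.symm

/-- Lemma A : integral kernel of the norm operator is the image of `q • - id`. -/
theorem exists_shift (pp : p.Prime) {q : T} (hq : q ^ p = 1) :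
    ∀ (n : ℕ) (u : S →₀ ℤ), u.support.card ≤ n →
      (∑ i ∈ Finset.range p, q ^ i • u) = 0 → ∃ v : S →₀ ℤ, u = q • v - v := by
  classical
  intro n
  induction n with
  | zero =>
      intro u hcard _
      have : u = 0 := by
        rwa [Nat.le_zero, Finset.card_eq_zero, Finsupp.support_eq_empty] at hcard
      exact ⟨0, by simp [this]⟩
  | succ n ih =>
      intro u hcard hu
      by_cases hu0 : u = 0
      · exact ⟨0, by simp [hu0]⟩
      obtain ⟨s, hs⟩ := Finsupp.support_nonempty_iff.mpr hu0
      -- s is not fixed by q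
      have hsfix : ¬ q • s = s := by
        intro hfix
        have h0 : (∑ i ∈ Finset.range p, q ^ i • u) s = 0 := by rw [hu]; rfl
        rw [Finsupp.finset_sum_apply] at h0
        have heach : ∀ i ∈ Finset.range p, (q ^ i • u) s = u s := by
          intro i _
          rw [ev_smul]
          congr 1
          rw [← inv_pow]
          exact fix_pow (fix_inv hfix) i
        rw [Finset.sum_congr rfl heach, Finset.sum_const, Finset.card_range] at h0
        have : u s = 0 := by
          have hp0 : (p : ℤ) ≠ 0 := Int.natCast_ne_zero.mpr pp.ne_zero
          have := h0
          rw [nsmul_eq_mul] at this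
          exact (mul_eq_zero.mp this).resolve_left (by exact_mod_cast hp0)
        exact (Finsupp.mem_support_iff.mp hs) this
      set a : ℕ → ℤ := fun i => u (yOrb q s i) with ha
      -- the sum of u over the orbit vanishes
      have hsum : ∑ i ∈ Finset.range p, a i = 0 := by
        have h0 : (∑ i ∈ Finset.range p, q ^ i • u) s = 0 := by rw [hu]; rfl
        rw [Finsupp.finset_sum_apply] at h0
        have heach : ∀ i ∈ Finset.range p, (q ^ i • u) s = a i := by
          intro i _
          rw [ev_smul]
          congr 1
          rw [← inv_pow]
          rfl
        rwa [Finset.sum_congr rfl heach] at h0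
      set b : ℕ → ℤ := fun j => ∑ i ∈ Finset.range j, a i with hb
      set v₀ : S →₀ ℤ := ∑ j ∈ Finset.range p, Finsupp.single (yOrb q s j) (b j) with hv₀
      set u' : S →₀ ℤ := u - (q • v₀ - v₀) with hu'
      -- u' vanishes on the orbit
      have horb : ∀ j, j < p → u' (yOrb q s j) = 0 := by
        intro j hj
        have hqv : (q • v₀) (yOrb q s j) = v₀ (yOrb q s (j+1)) := by
          rw [ev_smul]
          congr 1
          rw [yOrb_succ]
        have hval : v₀ (yOrb q s j) = b j := osum_eval pp hq hsfix b hj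
        by_cases hjp : j + 1 < p
        · have hval2 : v₀ (yOrb q s (j+1)) = b (j+1) := osum_eval pp hq hsfix b hjp
          rw [hu', Finsupp.sub_apply, Finsupp.sub_apply, hqv, hval, hval2]
          have hbs : b (j+1) = b j + a j := Finset.sum_range_succ a j
          rw [hbs]
          show a j - (b j + a j - b j) = 0
          ring
        · have hjeq : j + 1 = p := by omega
          have hyp : yOrb q s (j+1) = yOrb q s 0 := by
            rw [hjeq, yOrb_p pp hq, yOrb_zero]
          have hval2 : v₀ (yOrb q s (j+1)) = b 0 := by
            rw [hyp]; exact osum_eval pp hq hsfix b pp.pos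
          rw [hu', Finsupp.sub_apply, Finsupp.sub_apply, hqv, hval, hval2]
          have hb0 : b 0 = 0 := rfl
          have hbj : b j + a j = 0 := by
            have hbs : b (j+1) = b j + a j := Finset.sum_range_succ a j
            rw [hjeq] at hbs
            rw [← hbs]
            exact hsum
          rw [hb0]
          show a j - (0 - b j) = 0
          omega
      -- u' agrees with u off the orbit
      have hoff : ∀ x : S, (∀ j, j < p → x ≠ yOrb q s j) → u' x = u x := by
        intro x hx
        have hxq : ∀ j, j < p → q⁻¹ • x ≠ yOrb q s j := by
          intro j hj heq
          have hx' : x = q • yOrb q s j := by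
            rw [← heq, smul_smul, mul_inv_cancel, one_smul]
          cases j with
          | zero =>
              refine hx (p-1) (by omega) ?_
              rw [hx', q_smul_yOrb_zero pp hq]
          | succ i =>
              refine hx i (by omega) ?_
              rw [hx', q_smul_yOrb_succ]
        have h1 : (q • v₀) x = 0 := by
          rw [ev_smul]
          exact osum_eval_off b hxq
        have h2 : v₀ x = 0 := osum_eval_off b hx
        rw [hu', Finsupp.sub_apply, Finsupp.sub_apply, h1, h2]
        ring
      -- support decreases
      have hsupp : u'.support ⊆ u.support.erase s := by
        intro x hxs
        have hx0 : u' x ≠ 0 := Finsupp.mem_support_iff.mp hxs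
        by_cases hxorb : ∃ j, j < p ∧ x = yOrb q s j
        · obtain ⟨j, hj, rfl⟩ := hxorb
          exact absurd (horb j hj) hx0
        · push_neg at hxorb
          have heqx := hoff x hxorb
          rw [Finset.mem_erase]
          constructor
          · intro hxs'
            exact hxorb 0 pp.pos (by rw [hxs', yOrb_zero])
          · rw [Finsupp.mem_support_iff, ← heqx]
            exact hx0
      have hcard' : u'.support.card ≤ n := by
        have h3 := Finset.card_le_card hsupp
        have h4 := Finset.card_erase_of_mem hs
        omega
      -- new hypothesis
      have hu'sum : (∑ i ∈ Finset.range p, q ^ i • u') = 0 := by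
        have hterm : ∀ i, q ^ i • u' = q ^ i • u - (q ^ (i+1) • v₀ - q ^ i • v₀) := by
          intro i
          rw [hu', smul_sub, smul_sub]
          congr 2
          rw [smul_smul, ← pow_succ]
        have hsplit : (∑ i ∈ Finset.range p, q ^ i • u')
            = (∑ i ∈ Finset.range p, q ^ i • u)
              - ((∑ i ∈ Finset.range p, (q ^ (i+1) • v₀ - q ^ i • v₀))) := by
          rw [← Finset.sum_sub_distrib]
          exact Finset.sum_congr rfl (fun i _ => hterm i)
        rw [hsplit, hu, Finset.sum_range_sub (fun i => q ^ i • v₀), hq]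
        simp
      obtain ⟨v', hv'⟩ := ih u' hcard' hu'sum
      refine ⟨v' + v₀, ?_⟩
      have hdecomp : u = u' + (q • v₀ - v₀) := by rw [hu']; abel
      rw [hdecomp, hv', smul_add]
      abel

/-- Lemma B : if `q` acts without fixed points and `w` is invariant, `p` divides the total mass. -/
theorem dvd_eps_of_invariant (pp : p.Prime) {q : T} (hq : q ^ p = 1)
    (hfix : ∀ s : S, ¬ q • s = s) :
    ∀ (n : ℕ) (w : S →₀ ℤ), w.support.card ≤ n → q • w = w →
      (p:ℤ) ∣ (Finsupp.liftAddHom (fun _ => AddMonoidHom.id ℤ) w) := by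
  classical
  intro n
  induction n with
  | zero =>
      intro w hcard _
      have : w = 0 := by
        rwa [Nat.le_zero, Finset.card_eq_zero, Finsupp.support_eq_empty] at hcard
      rw [this]
      simp
  | succ n ih =>
      intro w hcard hw
      by_cases hw0 : w = 0
      · rw [hw0]; simp
      obtain ⟨s, hs⟩ := Finsupp.support_nonempty_iff.mpr hw0
      set a : ℤ := w s with ha
      -- w is constant on the orbit
      have hconst : ∀ j, j < p → w (yOrb q s j) = a := by
        intro j _
        induction j with
        | zero => rw [yOrb_zero]
        | succ k ihk =>
            have hk : w (yOrb q s k) = a := ihk (by omega)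
            have hstep : w (yOrb q s (k+1)) = (q • w) (yOrb q s k) := by
              rw [ev_smul]
              congr 1
              rw [yOrb_succ]
            rw [hstep, hw, hk]
      set osum : S →₀ ℤ := ∑ j ∈ Finset.range p, Finsupp.single (yOrb q s j) a with hosum
      set w' : S →₀ ℤ := w - osum with hw'
      have hsfix : ¬ q • s = s := hfix s
      -- osum is invariant
      have hosum_inv : q • osum = osum := by
        rw [hosum, Finset.smul_sum]
        have hterm : ∀ j, q • Finsupp.single (yOrb q s j) a
            = Finsupp.single (q • yOrb q s j) a := by
          intro j
          exact Finsupp.comapSMul_single q (yOrb q s j) a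
        rw [Finset.sum_congr rfl (fun j _ => hterm j)]
        obtain ⟨n', hn'⟩ : ∃ n', p = n' + 1 := ⟨p - 1, by have := pp.pos; omega⟩
        rw [hn']
        rw [Finset.sum_range_succ', Finset.sum_range_succ]
        congr 1
        · apply Finset.sum_congr rfl
          intro j _
          congr 1
          exact q_smul_yOrb_succ q s j
        · congr 1
          rw [q_smul_yOrb_zero pp hq s]
          congr 1
          omega
      have hw'_inv : q • w' = w' := by
        rw [hw', smul_sub, hw, hosum_inv]
      -- support decreases
      have horb : ∀ j, j < p → w' (yOrb q s j) = 0 := by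
        intro j hj
        rw [hw', Finsupp.sub_apply, hconst j hj]
        have hov : osum (yOrb q s j) = a := osum_eval pp hq hsfix (fun _ => a) hj
        rw [hov, sub_self]
      have hoff : ∀ x : S, (∀ j, j < p → x ≠ yOrb q s j) → w' x = w x := by
        intro x hx
        rw [hw', Finsupp.sub_apply, osum_eval_off (fun _ => a) hx, sub_zero]
      have hsupp : w'.support ⊆ w.support.erase s := by
        intro x hxs
        have hx0 : w' x ≠ 0 := Finsupp.mem_support_iff.mp hxs
        by_cases hxorb : ∃ j, j < p ∧ x = yOrb q s j
        · obtain ⟨j, hj, rfl⟩ := hxorb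
          exact absurd (horb j hj) hx0
        · push_neg at hxorb
          have heqx := hoff x hxorb
          rw [Finset.mem_erase]
          exact ⟨fun hxs' => hxorb 0 pp.pos (by rw [hxs', yOrb_zero]),
            Finsupp.mem_support_iff.mpr (by rw [← heqx]; exact hx0)⟩
      have hcard' : w'.support.card ≤ n := by
        have h3 := Finset.card_le_card hsupp
        have h4 := Finset.card_erase_of_mem hs
        omega
      have hdvd := ih w' hcard' hw'_inv
      have heps : (Finsupp.liftAddHom (fun _ => AddMonoidHom.id ℤ)) w
          = (Finsupp.liftAddHom (fun _ => AddMonoidHom.id ℤ)) w' + p * a := by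
        have h1 : (Finsupp.liftAddHom (fun (_ : S) => AddMonoidHom.id ℤ)) osum = p * a := by
          rw [hosum, map_sum]
          have hterm : ∀ j ∈ Finset.range p,
              (Finsupp.liftAddHom (fun (_ : S) => AddMonoidHom.id ℤ))
                (Finsupp.single (yOrb q s j) a) = a := by
            intro j _
            rw [Finsupp.liftAddHom_apply_single]
            rfl
          rw [Finset.sum_congr rfl hterm, Finset.sum_const, Finset.card_range, nsmul_eq_mul]
        have h2 : w = w' + osum := by rw [hw']; abel
        rw [h2, map_add, h1]
      rw [heps]
      exact dvd_add hdvd ⟨a, rfl⟩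

end OrbAux

-- EA lemmas and main assembly (to be appended inside AmalgFP namespace context)
section EA

lemma conj_pow₃ {T : Type u} [Group T] (a b : T) (n : ℕ) :
    (a⁻¹ * b * a) ^ n = a⁻¹ * b ^ n * a := by
  induction n with
  | zero => simp
  | succ k ih => rw [pow_succ, pow_succ, ih]; group

lemma ea_prod {A B : Type u} [Group A] [Group B]
    (hA : ElementaryAmenable A) (hB : ElementaryAmenable B) : ElementaryAmenable (A × B) := by
  have eker : A ≃* ((MonoidHom.snd A B).ker) :=
    { toFun := fun a => ⟨(a, 1), MonoidHom.mem_ker.mpr rfl⟩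
      invFun := fun x => (x : A × B).1
      left_inv := fun a => rfl
      right_inv := fun x => by
        apply Subtype.ext
        apply Prod.ext
        · rfl
        · exact ((x.2 : (x : A × B).2 = 1)).symm
      map_mul' := fun a b => Subtype.ext (Prod.ext rfl (mul_one 1).symm) }
  have hker : ElementaryAmenable ((MonoidHom.snd A B).ker) :=
    ElementaryAmenable.of_mulEquiv _ _ eker hA
  have hsurj : Function.Surjective (MonoidHom.snd A B) := fun b => ⟨(1, b), rfl⟩
  have equot : B ≃* (A × B) ⧸ (MonoidHom.snd A B).ker :=
    (QuotientGroup.quotientKerEquivOfSurjective _ hsurj).symm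
  exact ElementaryAmenable.of_extension _ _ hker (ElementaryAmenable.of_mulEquiv _ _ equot hB)

lemma ea_semidirect {A T₀ : Type u} [Group A] [Group T₀] (φ : T₀ →* MulAut A)
    (hA : ∀ a b : A, a * b = b * a) (hT : ElementaryAmenable T₀) :
    ElementaryAmenable (A ⋊[φ] T₀) := by
  have hEA_A : ElementaryAmenable A := ElementaryAmenable.of_abelian A hA
  have einl : A ≃* ((SemidirectProduct.rightHom : A ⋊[φ] T₀ →* T₀).ker) :=
    (MonoidHom.ofInjective SemidirectProduct.inl_injective).trans
      (MulEquiv.subgroupCongr SemidirectProduct.range_inl_eq_ker_rightHom)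
  have hker : ElementaryAmenable ((SemidirectProduct.rightHom : A ⋊[φ] T₀ →* T₀).ker) :=
    ElementaryAmenable.of_mulEquiv _ _ einl hEA_A
  have equot : T₀ ≃* (A ⋊[φ] T₀) ⧸ (SemidirectProduct.rightHom : A ⋊[φ] T₀ →* T₀).ker :=
    (QuotientGroup.quotientKerEquivOfSurjective _ SemidirectProduct.rightHom_surjective).symm
  exact ElementaryAmenable.of_extension _ _ hker (ElementaryAmenable.of_mulEquiv _ _ equot hT)

/-- positive multiples detect zero in `S →₀ ℤ`. -/
lemma nsmul_finsupp_eq_zero {S : Type u} {k : ℕ} (hk : 0 < k) {u : S →₀ ℤ}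
    (h : k • u = 0) : u = 0 := by
  ext s
  have hs : (k • u) s = 0 := by rw [h]; rfl
  have hs' : (k : ℤ) * u s = 0 := by
    rw [← hs]
    rw [← Nat.cast_smul_eq_nsmul ℤ k u, Finsupp.smul_apply, smul_eq_mul]
  have := mul_eq_zero.mp hs'
  rcases this with h1 | h2
  · exact absurd h1 (by exact_mod_cast hk.ne')
  · simpa using h2

end EA


end

end AmalgFP

attribute [local instance] Finsupp.comapSMul Finsupp.comapMulAction Finsupp.comapDistribMulAction

open AmalgFP Monoid Monoid.PushoutI Finsupp SemidirectProduct in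
/-- If `N` and `K` are torsion-free elementary amenable, then the amalgamated free
product `N ∗_L (L × K)` has the factorization property. -/
theorem amalg_hasFactorizationProperty (N K : Type u) [Group N] [Group K]
    (L : Subgroup N)
    (hNtf : Monoid.IsTorsionFree N) (hNea : ElementaryAmenable N)
    (hKtf : Monoid.IsTorsionFree K) (hKea : ElementaryAmenable K) :
    HasFactorizationProperty (Monoid.PushoutI (amalgMap N K L)) := by
  intro P hP f
  classical
  refine ⟨GrpCat.of ((Φ f).range), (Φ f).rangeRestrict,
    ((MonoidHom.fst (↑P) (N × K)).comp
      ((SemidirectProduct.rightHom).comp ((Φ f).range.subtype))), ?_, ?_, ?_⟩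
  · -- torsion-freeness
    intro x hx1 hfin
    obtain ⟨n, hn, hxn⟩ := isOfFinOrder_iff_pow_eq_one.mp hfin
    obtain ⟨g₀, hg₀⟩ := x.2
    apply hx1
    have hW : (Φ f g₀) ^ n = 1 := by
      rw [hg₀]
      have := congrArg Subtype.val hxn
      push_cast at this
      exact_mod_cast this
    have hΦn : Φ f (g₀ ^ n) = 1 := by rw [map_pow, hW]
    have hπn : (πT f g₀) ^ n = 1 := by
      rw [← πT_pow]
      show (Φ f (g₀ ^ n)).right = 1
      rw [hΦn]; rfl
    have hcn : cΦ f (g₀ ^ n) = 0 := by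
      unfold cΦ; rw [hΦn]; rfl
    have hfin_t : IsOfFinOrder (πT f g₀) := isOfFinOrder_iff_pow_eq_one.mpr ⟨n, hn, hπn⟩
    have hm0 : 0 < orderOf (πT f g₀) := hfin_t.orderOf_pos
    set m := orderOf (πT f g₀) with hmdef
    have hmn : m ∣ n := orderOf_dvd_of_pow_eq_one hπn
    have hcm : cΦ f (g₀ ^ m) = 0 := by
      have h1 : g₀ ^ n = (g₀ ^ m) ^ (n / m) := by rw [← pow_mul, Nat.mul_div_cancel' hmn]
      have h2 : πT f (g₀ ^ m) = 1 := by rw [πT_pow]; exact pow_orderOf_eq_one _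
      have h3 : cΦ f (g₀ ^ n) = (n / m) • cΦ f (g₀ ^ m) := by
        rw [h1, cΦ_pow, h2]
        simp
      have hn_m : 0 < n / m := Nat.div_pos (Nat.le_of_dvd hn hmn) hm0
      exact nsmul_finsupp_eq_zero hn_m (by rw [← h3, hcn])
    by_cases hm1 : m = 1
    · -- order 1 : the element is trivial
      have ht1 : πT f g₀ = 1 := orderOf_eq_one_iff.mp hm1
      have hc0 : cΦ f g₀ = 0 := by
        have h := hcm; rw [hm1, pow_one] at h; exact h
      have hΦ1 : Φ f g₀ = 1 := by
        apply SemidirectProduct.ext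
        · show (Φ f g₀).left = 1
          have htoadd : Multiplicative.toAdd (Φ f g₀).left = 0 := hc0
          have := congrArg Multiplicative.ofAdd htoadd
          rwa [ofAdd_toAdd] at this
        · exact ht1
      exact Subtype.ext (by rw [← hg₀, hΦ1]; rfl)
    · -- order m ≥ 2 : contradiction via the mod-p counting argument
      exfalso
      set p := m.minFac with hpdef
      have pp : p.Prime := Nat.minFac_prime hm1
      have hdvd_p : p ∣ m := Nat.minFac_dvd m
      set q₁ := (πT f g₀) ^ (m / p) with hq₁def
      have hπ₁ : πT f (g₀ ^ (m / p)) = q₁ := πT_pow f g₀ (m / p)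
      have hq₁p : q₁ ^ p = 1 := by
        rw [hq₁def, ← pow_mul, Nat.div_mul_cancel hdvd_p]
        exact pow_orderOf_eq_one _
      have hq₁ne : q₁ ≠ 1 := by
        intro h1
        have hdvd : m ∣ m / p := orderOf_dvd_of_pow_eq_one (by rw [← hq₁def, h1] : (πT f g₀) ^ (m/p) = 1)
        have hlt : m / p < m := Nat.div_lt_self hm0 pp.one_lt
        have hpos : 0 < m / p := Nat.div_pos (Nat.le_of_dvd hm0 hdvd_p) pp.pos
        have := Nat.le_of_dvd hpos hdvd
        omega
      -- no fixed points on T ⧸ range ρN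
      have hfix₁ : ∀ s : ((↑P × N × K) ⧸ (ρN f).range), ¬ q₁ • s = s := by
        intro s hfixs
        induction s using Quotient.inductionOn with
        | h t₀ =>
          rw [show (Quotient.mk _ t₀ : (↑P × N × K) ⧸ (ρN f).range) = QuotientGroup.mk t₀ from rfl,
            MulAction.Quotient.smul_mk, smul_eq_mul, QuotientGroup.eq] at hfixs
          obtain ⟨n₀, hn₀⟩ := hfixs
          have hsimp : (q₁ * t₀)⁻¹ * t₀ = t₀⁻¹ * q₁⁻¹ * t₀ := by group
          have hpow : (ρN f n₀) ^ p = 1 := by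
            rw [hn₀, hsimp, conj_pow₃, inv_pow, hq₁p, inv_one, mul_one, inv_mul_cancel]
          have hn₀p : n₀ ^ p = 1 := ρN_injective f (by rw [map_pow, hpow, map_one])
          have hn₀1 : n₀ = 1 := by
            by_contra hne
            exact hNtf n₀ hne (isOfFinOrder_iff_pow_eq_one.mpr ⟨p, pp.pos, hn₀p⟩)
          apply hq₁ne
          rw [hn₀1, map_one] at hn₀
          have hconj : t₀⁻¹ * q₁⁻¹ * t₀ = 1 := by rw [← hsimp, ← hn₀]
          have : q₁⁻¹ = 1 := by
            calc q₁⁻¹ = t₀ * (t₀⁻¹ * q₁⁻¹ * t₀) * t₀⁻¹ := by group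
            _ = 1 := by rw [hconj]; group
          exact inv_eq_one.mp this
      -- no fixed points on T ⧸ range ρLK
      have hfix₂ : ∀ s : ((↑P × N × K) ⧸ (ρLK f).range), ¬ q₁ • s = s := by
        intro s hfixs
        induction s using Quotient.inductionOn with
        | h t₀ =>
          rw [show (Quotient.mk _ t₀ : (↑P × N × K) ⧸ (ρLK f).range) = QuotientGroup.mk t₀ from rfl,
            MulAction.Quotient.smul_mk, smul_eq_mul, QuotientGroup.eq] at hfixs
          obtain ⟨x₀, hx₀⟩ := hfixs
          have hsimp : (q₁ * t₀)⁻¹ * t₀ = t₀⁻¹ * q₁⁻¹ * t₀ := by group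
          have hpow : (ρLK f x₀) ^ p = 1 := by
            rw [hx₀, hsimp, conj_pow₃, inv_pow, hq₁p, inv_one, mul_one, inv_mul_cancel]
          have hx₀p : x₀ ^ p = 1 := ρLK_injective f (by rw [map_pow, hpow, map_one])
          have hl : (x₀.1 : N) ^ p = 1 := by
            have h1 : (x₀ ^ p).1 = 1 := by rw [hx₀p]; rfl
            have h2 : ((x₀.1) ^ p : ↥L) = 1 := by rw [← Prod.pow_fst, h1]
            exact_mod_cast congrArg (Subtype.val) h2
          have hl1 : x₀.1 = 1 := by
            by_contra hne
            have hne' : (x₀.1 : N) ≠ 1 := fun hc => hne (Subtype.ext hc)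
            exact hNtf _ hne' (isOfFinOrder_iff_pow_eq_one.mpr ⟨p, pp.pos, hl⟩)
          have hk1 : x₀.2 = 1 := by
            by_contra hne
            have hk : x₀.2 ^ p = 1 := by
              have h1 : (x₀ ^ p).2 = 1 := by rw [hx₀p]; rfl
              rwa [Prod.pow_snd] at h1
            exact hKtf _ hne (isOfFinOrder_iff_pow_eq_one.mpr ⟨p, pp.pos, hk⟩)
          have hx₀1 : x₀ = 1 := Prod.ext hl1 hk1
          apply hq₁ne
          rw [hx₀1, map_one] at hx₀
          have hconj : t₀⁻¹ * q₁⁻¹ * t₀ = 1 := by rw [← hsimp, ← hx₀]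
          have : q₁⁻¹ = 1 := by
            calc q₁⁻¹ = t₀ * (t₀⁻¹ * q₁⁻¹ * t₀) * t₀⁻¹ := by group
            _ = 1 := by rw [hconj]; group
          exact inv_eq_one.mp this
      -- the norm of the cocycle of g₁ := g₀ ^ (m / p) vanishes
      have hu : (∑ i ∈ Finset.range p, q₁ ^ i • cΦ f (g₀ ^ (m / p))) = 0 := by
        have h1 : (g₀ ^ (m / p)) ^ p = g₀ ^ m := by
          rw [← pow_mul, Nat.div_mul_cancel hdvd_p]
        have h2 := cΦ_pow f (g₀ ^ (m / p)) p
        rw [h1, hcm, hπ₁] at h2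
        exact h2.symm
      obtain ⟨v, hv⟩ := exists_shift pp hq₁p _ (cΦ f (g₀ ^ (m / p))) le_rfl hu
      -- boundary identities
      have hb₁ : bdry₁ f (cΦ f (g₀ ^ (m / p))) = q₁ • X₁ f - X₁ f := by
        rw [(bdry_ids f (g₀ ^ (m / p))).1, hπ₁]
      have hb₂ : bdry₂ f (cΦ f (g₀ ^ (m / p))) = 0 := (bdry_ids f (g₀ ^ (m / p))).2
      -- first invariant : w₁ = bdry₁ v - X₁
      have heq₁ : q₁ • (bdry₁ f v) - bdry₁ f v = q₁ • X₁ f - X₁ f := by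
        rw [← hb₁, hv, map_sub, bdry₁_smul]
      have hw₁ : q₁ • (bdry₁ f v - X₁ f) = bdry₁ f v - X₁ f := by
        rw [smul_sub]
        have h := eq_add_of_sub_eq heq₁
        rw [h]
        abel
      have hdvd₁ := dvd_eps_of_invariant pp hq₁p hfix₁ _ (bdry₁ f v - X₁ f) le_rfl hw₁
      -- second invariant : w₂ = bdry₂ v
      have heq₂ : q₁ • (bdry₂ f v) - bdry₂ f v = 0 := by
        rw [← hb₂, hv, map_sub, bdry₂_smul]
      have hw₂ : q₁ • (bdry₂ f v) = bdry₂ f v := by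
        have := sub_eq_zero.mp heq₂
        exact this
      have hdvd₂ := dvd_eps_of_invariant pp hq₁p hfix₂ _ (bdry₂ f v) le_rfl hw₂
      -- compute the two masses
      have heps₁ : eps (bdry₁ f v - X₁ f) = eps v - 1 := by
        rw [map_sub]
        congr 1
        · exact eps_mapDomain _ v
        · exact eps_single _ _
      have heps₂ : eps (bdry₂ f v) = eps v := eps_mapDomain _ v
      have hd₁ : (p:ℤ) ∣ eps v - 1 := by rw [← heps₁]; exact hdvd₁
      have hd₂ : (p:ℤ) ∣ eps v := by rw [← heps₂]; exact hdvd₂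
      have : (p:ℤ) ∣ 1 := by
        have := dvd_sub hd₂ hd₁
        simpa using this
      have hp1 : p ∣ 1 := by exact_mod_cast this
      exact absurd (Nat.dvd_one.mp hp1) pp.one_lt.ne'
  · -- elementary amenability
    exact ElementaryAmenable.of_subgroup _ (Φ f).range
      (ea_semidirect _ (fun a b => mul_comm a b)
        (ea_prod (ElementaryAmenable.of_finite (↑P) hP) (ea_prod hNea hKea)))
  · -- factorization
    apply MonoidHom.ext
    intro x
    exact fst_πT f x
end
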